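/- Let S be a finite set with |S| = n, and let 𝔖 be a collection of 3-element subsets of S such that for any r, s ∈ 𝔖 the symmetric difference |r △ s| lies in {0, 4, 6}. Then |𝔖| ≤ ⌊n·⌊(n−1)/2⌋/3⌋. -/
import Mathlib


/-- General bound of Lemma `lem.max.set.A` for m = 3. -/
theorem triple_system_bound {α : Type*} [DecidableEq α] (S : Finset α) (n : ℕ)
    (hS : S.card = n) (𝔖 : Finset (Finset α))
    (hsub : ∀ s ∈ 𝔖, s ⊆ S) (hcard : ∀ s ∈ 𝔖, s.card = 3)
    (hdiff : ∀ r ∈ 𝔖, ∀ s ∈ 𝔖, (symmDiff r s).card ∈ ({0, 4, 6} : Set ℕ)) :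
    𝔖.card ≤ n * ((n - 1) / 2) / 3 := by
  classical
  -- any two distinct members intersect in at most one point
  have hinter : ∀ r ∈ 𝔖, ∀ s ∈ 𝔖, r ≠ s → (r ∩ s).card ≤ 1 := by
    intro r hr s hs hne
    have h := hdiff r hr s hs
    have hsd : (symmDiff r s).card + 2 * (r ∩ s).card = 6 := by
      have h1 : (r \ s).card + (r ∩ s).card = r.card := Finset.card_sdiff_add_card_inter r s
      have h2 : (s \ r).card + (s ∩ r).card = s.card := Finset.card_sdiff_add_card_inter s r
      have hdisj : Disjoint (r \ s) (s \ r) := disjoint_sdiff_sdiff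
      have hu : (symmDiff r s).card = (r \ s).card + (s \ r).card := by
        rw [symmDiff_def, Finset.sup_eq_union, Finset.card_union_of_disjoint hdisj]
      rw [Finset.inter_comm r s] at h1
      rw [hcard r hr] at h1
      rw [hcard s hs] at h2
      rw [Finset.inter_comm r s]
      omega
    have hne' : (symmDiff r s).card ≠ 0 := by
      intro h0
      apply hne
      rwa [Finset.card_eq_zero, Finset.symmDiff_eq_empty] at h0
    simp only [Set.mem_insert_iff, Set.mem_singleton_iff] at h
    omega
  -- degree bound
  have hdeg : ∀ x ∈ S, (𝔖.filter (fun s => x ∈ s)).card ≤ (n - 1) / 2 := by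
    intro x hx
    set T := 𝔖.filter (fun s => x ∈ s) with hT
    have hpd : ∀ s ∈ T, ∀ t ∈ T, s ≠ t → Disjoint (s.erase x) (t.erase x) := by
      intro s hs t ht hst
      rw [Finset.mem_filter] at hs ht
      rw [Finset.disjoint_left]
      intro y hy hy'
      have hyx : y ≠ x := Finset.ne_of_mem_erase hy
      have hys : y ∈ s := Finset.mem_of_mem_erase hy
      have hyt : y ∈ t := Finset.mem_of_mem_erase hy'
      have : ({x, y} : Finset α) ⊆ s ∩ t := by
        intro z hz
        rw [Finset.mem_insert, Finset.mem_singleton] at hz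
        rcases hz with rfl | rfl <;> simp [Finset.mem_inter, hs.2, ht.2, hys, hyt]
      have hc2 : ({x, y} : Finset α).card = 2 := by
        rw [Finset.card_insert_of_notMem (by simp [hyx.symm]), Finset.card_singleton]
      have := Finset.card_le_card this
      have := hinter s hs.1 t ht.1 hst
      omega
    have hbu : (T.biUnion (fun s => s.erase x)).card = 2 * T.card := by
      rw [Finset.card_biUnion hpd]
      rw [Finset.sum_congr rfl (fun s hs => ?_), Finset.sum_const, smul_eq_mul, mul_comm]
      rw [Finset.mem_filter] at hs
      rw [Finset.card_erase_of_mem hs.2, hcard s hs.1]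
    have hsubset : T.biUnion (fun s => s.erase x) ⊆ S.erase x := by
      intro y hy
      rw [Finset.mem_biUnion] at hy
      obtain ⟨s, hs, hy⟩ := hy
      rw [Finset.mem_filter] at hs
      exact Finset.mem_erase.mpr ⟨Finset.ne_of_mem_erase hy,
        hsub s hs.1 (Finset.mem_of_mem_erase hy)⟩
    have hle : 2 * T.card ≤ n - 1 := by
      have := Finset.card_le_card hsubset
      rw [hbu, Finset.card_erase_of_mem hx, hS] at this
      exact this
    omega
  -- double counting
  have hdc : ∑ x ∈ S, (𝔖.filter (fun s => x ∈ s)).card = 3 * 𝔖.card := by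
    have : ∀ x, (𝔖.filter (fun s => x ∈ s)).card = ∑ s ∈ 𝔖, if x ∈ s then 1 else 0 :=
      fun x => Finset.card_filter _ _
    rw [Finset.sum_congr rfl (fun x _ => this x), Finset.sum_comm]
    have : ∀ s ∈ 𝔖, (∑ x ∈ S, if x ∈ s then 1 else 0) = 3 := by
      intro s hs
      rw [← Finset.card_filter]
      have : S.filter (fun x => x ∈ s) = s := by
        rw [Finset.filter_mem_eq_inter, Finset.inter_eq_right]
        exact hsub s hs
      rw [this, hcard s hs]
    rw [Finset.sum_congr rfl this, Finset.sum_const, smul_eq_mul, mul_comm]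
  have hmain : 3 * 𝔖.card ≤ n * ((n - 1) / 2) := by
    calc 3 * 𝔖.card = ∑ x ∈ S, (𝔖.filter (fun s => x ∈ s)).card := hdc.symm
      _ ≤ ∑ x ∈ S, (n - 1) / 2 := Finset.sum_le_sum hdeg
      _ = n * ((n - 1) / 2) := by rw [Finset.sum_const, smul_eq_mul, hS]
  rw [Nat.le_div_iff_mul_le (by norm_num)]
  omega
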